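/- arXiv:1509.07664 — 2 statements merged into one kernel-verified Lean document; each statement's English description precedes it below -/
import Mathlib

section
/- There exist 3ⁿ dyadic grids 𝒟_α on ℝⁿ such that for every cube Q ⊂ ℝⁿ there are α and a cube Q_α ∈ 𝒟_α with Q ⊂ Q_α and |Q_α| ≤ 6ⁿ|Q|. -/
open MeasureTheory ENNReal Set
open scoped NNReal
noncomputable section

abbrev Rn (n : ℕ) := Fin n → ℝ
variable {n : ℕ}

def cubeOf (a : Rn n) (h : ℝ) : Set (Rn n) := Set.univ.pi fun i => Set.Ico (a i) (a i + h)

def IsCube (Q : Set (Rn n)) : Prop := ∃ (a : Rn n) (h : ℝ), 0 < h ∧ Q = cubeOf a h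

def avgE (Q : Set (Rn n)) (f : Rn n → ℝ≥0∞) : ℝ≥0∞ :=
  (volume Q)⁻¹ * ∫⁻ x in Q, f x ∂volume

def maximal (f : Rn n → ℝ≥0∞) (x : Rn n) : ℝ≥0∞ :=
  ⨆ (Q : Set (Rn n)) (_ : IsCube Q ∧ x ∈ Q), avgE Q f

def IsDyadicGrid (D : Set (Set (Rn n))) : Prop :=
  (∀ Q ∈ D, ∃ (a : Rn n) (k : ℤ), Q = cubeOf a ((2:ℝ)^k)) ∧
  (∀ Q ∈ D, ∀ R ∈ D, Q ∩ R = Q ∨ Q ∩ R = R ∨ Q ∩ R = ∅) ∧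
  (∀ (k : ℤ) (x : Rn n), ∃! Q, Q ∈ D ∧ (∃ a : Rn n, Q = cubeOf a ((2:ℝ)^k)) ∧ x ∈ Q)

def dyadicMaximal (D : Set (Set (Rn n))) (f : Rn n → ℝ≥0∞) (x : Rn n) : ℝ≥0∞ :=
  ⨆ (Q : Set (Rn n)) (_ : Q ∈ D ∧ x ∈ Q), avgE Q f

def vmodular (p : Rn n → ℝ) (f : Rn n → ℝ≥0∞) : ℝ≥0∞ := ∫⁻ x, f x ^ p x ∂volume

def vnorm (p : Rn n → ℝ) (f : Rn n → ℝ≥0∞) : ℝ≥0∞ :=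
  sInf {lam : ℝ≥0∞ | 0 < lam ∧ vmodular p (fun x => f x / lam) ≤ 1}

def wnorm (p : Rn n → ℝ) (w f : Rn n → ℝ≥0∞) : ℝ≥0∞ := vnorm p (fun x => f x * w x)

/-! ### Auxiliary 1-dimensional lemmas -/

/-- sign of `(-1)^k` as an integer -/
def gsgn (k : ℤ) : ℤ := if Even k then 1 else -1

lemma gsgn_cast (k : ℤ) : ((gsgn k : ℤ) : ℝ) = (-1:ℝ)^k := by
  unfold gsgn
  rcases Int.even_or_odd k with he | ho
  · simp [he, Even.neg_one_zpow he]
  · simp [Int.not_even_iff_odd.mpr ho, Odd.neg_one_zpow ho]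

lemma gsgn_cases (k : ℤ) : gsgn k = 1 ∨ gsgn k = -1 := by
  unfold gsgn; split <;> simp

lemma mem_gIco_iff {P s x : ℝ} (hP : 0 < P) (m : ℤ) :
    x ∈ Set.Ico (P*(m+s)) (P*(m+s)+P) ↔ ⌊x/P - s⌋ = m := by
  rw [Int.floor_eq_iff, Set.mem_Ico]
  constructor
  · rintro ⟨h1, h2⟩
    constructor
    · rw [le_sub_iff_add_le, le_div_iff₀ hP]; nlinarith
    · rw [sub_lt_iff_lt_add, div_lt_iff₀ hP]; nlinarith
  · rintro ⟨h1, h2⟩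
    rw [le_sub_iff_add_le, le_div_iff₀ hP] at h1
    rw [sub_lt_iff_lt_add, div_lt_iff₀ hP] at h2
    constructor <;> nlinarith

lemma nest1 {k l : ℤ} (hkl : k ≤ l) (m M : ℤ) (s : ℝ)
    (hne : (Set.Ico ((2:ℝ)^k*(m+s)) ((2:ℝ)^k*(m+s)+(2:ℝ)^k) ∩
            Set.Ico ((2:ℝ)^k*(M+s)) ((2:ℝ)^k*(M+s)+(2:ℝ)^l)).Nonempty) :
    Set.Ico ((2:ℝ)^k*(m+s)) ((2:ℝ)^k*(m+s)+(2:ℝ)^k) ⊆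
      Set.Ico ((2:ℝ)^k*(M+s)) ((2:ℝ)^k*(M+s)+(2:ℝ)^l) := by
  have hP : (0:ℝ) < (2:ℝ)^k := zpow_pos (by norm_num) k
  set p := (l - k).toNat with hp
  have hl : l = k + (p:ℤ) := by
    have := Int.toNat_of_nonneg (sub_nonneg.2 hkl); omega
  have h2l : (2:ℝ)^l = (2:ℝ)^k * (2:ℝ)^p := by
    rw [hl, zpow_add₀ (by norm_num : (2:ℝ) ≠ 0), zpow_natCast]
  have hNp : (1:ℝ) ≤ (2:ℝ)^p := one_le_pow₀ (by norm_num)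
  obtain ⟨x, hx1, hx2⟩ := hne
  rw [Set.mem_Ico] at hx1 hx2
  rw [h2l] at hx2 ⊢
  have hMm : (M:ℝ) ≤ m := by
    have h : (2:ℝ)^k*(M+s) < (2:ℝ)^k*((m+1)+s) := by
      calc (2:ℝ)^k*(M+s) ≤ x := hx2.1
        _ < (2:ℝ)^k*(m+s)+(2:ℝ)^k := hx1.2
        _ = (2:ℝ)^k*((m+1)+s) := by ring
    have := (mul_lt_mul_iff_right₀ hP).mp h
    have : (M:ℝ) < (m:ℝ) + 1 := by linarith
    exact_mod_cast Int.lt_add_one_iff.mp (by exact_mod_cast this)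
  have hmM : (m:ℝ) + 1 ≤ (M:ℝ) + (2:ℝ)^p := by
    have h : (2:ℝ)^k*(m+s) < (2:ℝ)^k*((M+(2:ℝ)^p)+s) := by
      calc (2:ℝ)^k*(m+s) ≤ x := hx1.1
        _ < (2:ℝ)^k*(M+s)+(2:ℝ)^k*(2:ℝ)^p := hx2.2
        _ = (2:ℝ)^k*((M+(2:ℝ)^p)+s) := by ring
    have h2 := (mul_lt_mul_iff_right₀ hP).mp h
    have h3 : (m:ℝ) < (M:ℝ) + (2:ℝ)^p := by linarith
    have h4 : m < M + (2^p : ℤ) := by exact_mod_cast (by push_cast; exact h3 : (m:ℝ) < ((M + 2^p : ℤ):ℝ))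
    have h5 : m + 1 ≤ M + (2^p:ℤ) := h4
    calc (m:ℝ)+1 = ((m+1 : ℤ):ℝ) := by push_cast; ring
      _ ≤ ((M + 2^p : ℤ):ℝ) := by exact_mod_cast h5
      _ = (M:ℝ) + (2:ℝ)^p := by push_cast; ring
  intro y hy
  rw [Set.mem_Ico] at hy ⊢
  have e1 := mul_le_mul_of_nonneg_left hMm hP.le
  have e2 := mul_le_mul_of_nonneg_left hmM hP.le
  constructor
  · nlinarith [hy.1]
  · nlinarith [hy.2]

lemma lemC {k l : ℤ} (hkl : k ≤ l) (c : ℕ) (m' : ℤ) :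
    ∃ M : ℤ, (2:ℝ)^l * ((m':ℝ) + (-1:ℝ)^l * (c:ℝ)/3) = (2:ℝ)^k * ((M:ℝ) + (-1:ℝ)^k * (c:ℝ)/3) := by
  set p := (l - k).toNat with hp
  have hl : l = k + (p:ℤ) := by
    have := Int.toNat_of_nonneg (sub_nonneg.2 hkl); omega
  have h3 : (3:ℤ) ∣ (-2)^p - 1 := by
    have h : (-2 : ℤ) ≡ 1 [ZMOD 3] := by decide
    simpa using (h.pow p).symm.dvd
  set d := ((-2:ℤ)^p - 1)/3 with hdd
  have hd : (3:ℤ) * d = (-2)^p - 1 := Int.mul_ediv_cancel' h3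
  have hdR : (3:ℝ) * (d:ℝ) = (-2:ℝ)^p - 1 := by exact_mod_cast hd
  have hnp : (-2:ℝ)^p = (-1:ℝ)^p * 2^p := by
    rw [show (-2:ℝ) = -1 * 2 by norm_num, mul_pow]
  refine ⟨2^p * m' + gsgn k * d * (c:ℤ), ?_⟩
  have he := gsgn_cast k
  rw [hl, zpow_add₀ (by norm_num : (2:ℝ) ≠ 0), zpow_add₀ (by norm_num : (-1:ℝ) ≠ 0),
    zpow_natCast, zpow_natCast]
  have hD : (d:ℝ) = ((-1:ℝ)^p * 2^p - 1)/3 := by rw [← hnp]; linarith [hdR]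
  push_cast
  rw [he, hD]
  ring

lemma tpoint_unique {t a h : ℝ} (hh : 0 < h) (ht : h < t) {p q : ℤ}
    (hp : t * p ∈ Set.Ioo a (a+h)) (hq : t * q ∈ Set.Ioo a (a+h)) : p = q := by
  have ht0 : 0 < t := lt_trans hh ht
  rw [Set.mem_Ioo] at hp hq
  have h1 : t * |(p:ℝ) - q| < t * 1 := by
    rcases le_total ((p:ℝ)) q with hle | hle
    · rw [abs_of_nonpos (by linarith)]; nlinarith
    · rw [abs_of_nonneg (by linarith)]; nlinarith
  have h2 : |(p:ℝ) - q| < 1 := lt_of_mul_lt_mul_left h1 ht0.le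
  have h3 : |p - q| < 1 := by exact_mod_cast (by push_cast; exact h2 : |((p - q : ℤ):ℝ)| < 1)
  have := Int.abs_lt_one_iff.mp h3
  omega

lemma good_shift (k : ℤ) (a h : ℝ) (hh : 0 < h) (hk : 3*h < (2:ℝ)^k) :
    ∃ c : Fin 3, ∀ m : ℤ, (2:ℝ)^k * ((m:ℝ) + (-1:ℝ)^k * ((c:ℕ):ℝ)/3) ∉ Set.Ioo a (a+h) := by
  set t := (2:ℝ)^k/3 with htdef
  have ht : h < t := by
    rw [htdef, lt_div_iff₀ (by norm_num : (0:ℝ) < 3)]; linarith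
  have hrw : ∀ (c : ℕ) (m : ℤ), (2:ℝ)^k * ((m:ℝ) + (-1:ℝ)^k * (c:ℝ)/3)
      = t * ((gsgn k * (c:ℤ) + 3*m : ℤ) : ℝ) := by
    intro c m
    push_cast [gsgn_cast]
    rw [htdef]; ring
  by_cases hex : ∃ p : ℤ, t * (p:ℝ) ∈ Set.Ioo a (a+h)
  · obtain ⟨p, hpmem⟩ := hex
    have hb1 := Int.emod_nonneg (gsgn k * (p+1)) (by norm_num : (3:ℤ) ≠ 0)
    have hb2 := Int.emod_lt_of_pos (gsgn k * (p+1)) (by norm_num : (0:ℤ) < 3)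
    refine ⟨⟨((gsgn k * (p+1)) % 3).toNat, by omega⟩, ?_⟩
    intro m hmem
    rw [hrw] at hmem
    have hpe := tpoint_unique hh ht hmem hpmem
    have hcast : ((⟨((gsgn k * (p+1)) % 3).toNat, by omega⟩ : Fin 3) : ℕ) = ((gsgn k * (p+1)) % 3).toNat := rfl
    rw [hcast] at hpe
    have hnn : ((((gsgn k * (p+1)) % 3).toNat : ℕ) : ℤ) = (gsgn k * (p+1)) % 3 := Int.toNat_of_nonneg hb1
    rw [hnn] at hpe
    rcases gsgn_cases k with hg | hg <;> rw [hg] at hpe <;> omega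
  · push_neg at hex
    refine ⟨0, ?_⟩
    intro m hmem
    rw [hrw] at hmem
    exact hex _ hmem

/-! ### The shifted dyadic grids -/

def sh (α : Fin n → Fin 3) (k : ℤ) (i : Fin n) : ℝ := (-1:ℝ)^k * ((α i : ℕ):ℝ)/3

def gpt (α : Fin n → Fin 3) (k : ℤ) (j : Fin n → ℤ) : Rn n :=
  fun i => (2:ℝ)^k * ((j i : ℝ) + sh α k i)

def Dg (α : Fin n → Fin 3) : Set (Set (Rn n)) :=
  {Q | ∃ (k : ℤ) (j : Fin n → ℤ), Q = cubeOf (gpt α k j) ((2:ℝ)^k)}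

lemma mem_cubeOf {a : Rn n} {h : ℝ} {x : Rn n} :
    x ∈ cubeOf a h ↔ ∀ i, x i ∈ Set.Ico (a i) (a i + h) := by
  simp [cubeOf, Set.mem_pi]

lemma cube_inter_cases (α : Fin n → Fin 3) {k l : ℤ} (hkl : k ≤ l) (j j' : Fin n → ℤ) :
    cubeOf (gpt α k j) ((2:ℝ)^k) ∩ cubeOf (gpt α l j') ((2:ℝ)^l) = cubeOf (gpt α k j) ((2:ℝ)^k) ∨
    cubeOf (gpt α k j) ((2:ℝ)^k) ∩ cubeOf (gpt α l j') ((2:ℝ)^l) = ∅ := by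
  have hM : ∀ i, ∃ M : ℤ, (2:ℝ)^l * ((j' i : ℝ) + (-1:ℝ)^l * ((α i : ℕ):ℝ)/3)
      = (2:ℝ)^k * ((M:ℝ) + (-1:ℝ)^k * ((α i : ℕ):ℝ)/3) := fun i => lemC hkl _ _
  choose M hMe using hM
  by_cases hall : ∀ i, (Set.Ico (gpt α k j i) (gpt α k j i + (2:ℝ)^k) ∩
      Set.Ico (gpt α l j' i) (gpt α l j' i + (2:ℝ)^l)).Nonempty
  · left
    rw [Set.inter_eq_left]
    intro x hx
    rw [mem_cubeOf] at hx ⊢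
    intro i
    have he : gpt α l j' i = (2:ℝ)^k * ((M i : ℝ) + sh α k i) := hMe i
    have hne : (Set.Ico ((2:ℝ)^k*((j i : ℝ)+sh α k i)) ((2:ℝ)^k*((j i : ℝ)+sh α k i)+(2:ℝ)^k) ∩
        Set.Ico ((2:ℝ)^k*((M i : ℝ)+sh α k i)) ((2:ℝ)^k*((M i : ℝ)+sh α k i)+(2:ℝ)^l)).Nonempty := by
      have := hall i
      rwa [show gpt α k j i = (2:ℝ)^k*((j i : ℝ)+sh α k i) from rfl, he] at this
    have hsub := nest1 hkl (j i) (M i) (sh α k i) hne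
    have hxi := hx i
    rw [show gpt α k j i = (2:ℝ)^k*((j i : ℝ)+sh α k i) from rfl] at hxi
    have := hsub hxi
    rwa [show gpt α l j' i = (2:ℝ)^k*((M i : ℝ)+sh α k i) from he] 
  · right
    obtain ⟨i, hi⟩ := not_forall.mp hall
    have hie : Set.Ico (gpt α k j i) (gpt α k j i + (2:ℝ)^k) ∩
        Set.Ico (gpt α l j' i) (gpt α l j' i + (2:ℝ)^l) = ∅ :=
      Set.not_nonempty_iff_eq_empty.mp hi
    unfold cubeOf
    rw [← Set.pi_inter_distrib]
    exact Set.univ_pi_eq_empty hie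

lemma scale_eq (hn : 0 < n) {a b : Rn n} {h h' : ℝ} (hh : 0 < h) (hh' : 0 < h')
    (he : cubeOf a h = cubeOf b h') : h = h' := by
  set i0 : Fin n := ⟨0, hn⟩ with hi0
  have key : ∀ (u v : Rn n) (g g' : ℝ), 0 < g → cubeOf u g = cubeOf v g' →
      Set.Ico (u i0) (u i0 + g) ⊆ Set.Ico (v i0) (v i0 + g') := by
    intro u v g g' hg hcube y hy
    have hxmem : Function.update u i0 y ∈ cubeOf u g := by
      rw [mem_cubeOf]
      intro i
      by_cases hi : i = i0
      · subst hi; rw [Function.update_self]; exact hy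
      · rw [Function.update_of_ne hi]; exact ⟨le_refl _, by linarith⟩
    rw [hcube, mem_cubeOf] at hxmem
    have := hxmem i0
    rwa [Function.update_self] at this
  have h1 := key a b h h' hh he
  have h2 := key b a h' h hh' he.symm
  have heq := Set.Subset.antisymm h1 h2
  have := (Set.Ico_eq_Ico_iff (Or.inl (by linarith : a i0 < a i0 + h))).mp heq
  linarith [this.1, this.2]

lemma Dg_exists_unique (α : Fin n → Fin 3) (k : ℤ) (x : Rn n) :
    ∃! Q, Q ∈ Dg α ∧ (∃ a : Rn n, Q = cubeOf a ((2:ℝ)^k)) ∧ x ∈ Q := by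
  have hP : (0:ℝ) < (2:ℝ)^k := zpow_pos (by norm_num) k
  set j0 : Fin n → ℤ := fun i => ⌊x i / (2:ℝ)^k - sh α k i⌋ with hj0
  refine ⟨cubeOf (gpt α k j0) ((2:ℝ)^k), ⟨⟨k, j0, rfl⟩, ⟨gpt α k j0, rfl⟩, ?_⟩, ?_⟩
  · rw [mem_cubeOf]; intro i
    exact (mem_gIco_iff hP (j0 i)).mpr rfl
  · rintro Q ⟨⟨k', j', rfl⟩, ⟨a, ha⟩, hx⟩
    rcases Nat.eq_zero_or_pos n with hn | hn
    · subst hn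
      have h0 : ∀ (b : Rn 0) (g : ℝ), cubeOf b g = Set.univ := by
        intro b g; ext y
        simp only [cubeOf, Set.mem_pi, Set.mem_univ, iff_true]
        exact fun i _ => i.elim0
      rw [h0, h0]
    · have hk' : k' = k := by
        have hs := scale_eq hn (zpow_pos (by norm_num) k') hP ha
        exact zpow_right_injective₀ (by norm_num : (0:ℝ) < 2) (by norm_num) hs
      subst hk'
      have hje : j' = j0 := by
        funext i
        have hxi := (mem_cubeOf.mp hx) i
        rw [show gpt α k' j' i = (2:ℝ)^k'*((j' i : ℝ)+sh α k' i) from rfl] at hxi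
        exact ((mem_gIco_iff hP (j' i)).mp hxi).symm
      rw [hje]

lemma isDyadicGrid_Dg (α : Fin n → Fin 3) : IsDyadicGrid (Dg α) := by
  refine ⟨?_, ?_, ?_⟩
  · rintro Q ⟨k, j, rfl⟩; exact ⟨gpt α k j, k, rfl⟩
  · rintro Q ⟨k, j, rfl⟩ R ⟨l, j', rfl⟩
    rcases le_total k l with hkl | hlk
    · rcases cube_inter_cases α hkl j j' with h | h
      · exact Or.inl h
      · exact Or.inr (Or.inr h)
    · rcases cube_inter_cases α hlk j' j with h | h
      · exact Or.inr (Or.inl (by rw [Set.inter_comm]; exact h))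
      · exact Or.inr (Or.inr (by rw [Set.inter_comm]; exact h))
  · exact Dg_exists_unique α

lemma volume_cubeOf (a : Rn n) (h : ℝ) : volume (cubeOf a h) = ENNReal.ofReal h ^ n := by
  rw [cubeOf, MeasureTheory.volume_pi_pi]
  simp only [Real.volume_Ico, add_sub_cancel_left]
  rw [Finset.prod_const, Finset.card_univ, Fintype.card_fin]

theorem three_pow_n_dyadic_grids (n : ℕ) :
    ∃ D : Fin (3^n) → Set (Set (Rn n)),
      (∀ a, IsDyadicGrid (D a)) ∧
      ∀ Q : Set (Rn n), IsCube Q → ∃ (a : Fin (3^n)) (Qa : Set (Rn n)),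
        Qa ∈ D a ∧ Q ⊆ Qa ∧ volume Qa ≤ 6^n * volume Q := by
  refine ⟨fun a => Dg (finFunctionFinEquiv.symm a), fun a => isDyadicGrid_Dg _, ?_⟩
  rintro Q ⟨b, h, hh, rfl⟩
  obtain ⟨K, hK⟩ := exists_mem_Ico_zpow (x := 3*h) (y := (2:ℝ)) (by linarith) one_lt_two
  set k := K + 1 with hkdef
  have hP : (0:ℝ) < (2:ℝ)^k := zpow_pos (by norm_num) k
  have hlow : 3*h < (2:ℝ)^k := hK.2
  have hup : (2:ℝ)^k ≤ 6*h := by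
    have h2 : (2:ℝ)^k = 2 * (2:ℝ)^K := by
      rw [hkdef, zpow_add_one₀ (by norm_num : (2:ℝ) ≠ 0)]; ring
    nlinarith [hK.1]
  have hgood : ∀ i : Fin n, ∃ c : Fin 3, ∀ m : ℤ,
      (2:ℝ)^k * ((m:ℝ) + (-1:ℝ)^k * ((c:ℕ):ℝ)/3) ∉ Set.Ioo (b i) (b i + h) :=
    fun i => good_shift k (b i) h hh hlow
  choose α hα using hgood
  set j0 : Fin n → ℤ := fun i => ⌊b i / (2:ℝ)^k - sh α k i⌋ with hj0
  refine ⟨finFunctionFinEquiv α, cubeOf (gpt α k j0) ((2:ℝ)^k), ?_, ?_, ?_⟩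
  · show _ ∈ Dg (finFunctionFinEquiv.symm (finFunctionFinEquiv α))
    rw [Equiv.symm_apply_apply]
    exact ⟨k, j0, rfl⟩
  · intro x hx
    rw [mem_cubeOf] at hx ⊢
    intro i
    have hbi : b i ∈ Set.Ico ((2:ℝ)^k*((j0 i : ℝ) + sh α k i)) ((2:ℝ)^k*((j0 i : ℝ) + sh α k i)+(2:ℝ)^k) :=
      (mem_gIco_iff hP (j0 i)).mpr rfl
    rw [show gpt α k j0 i = (2:ℝ)^k*((j0 i : ℝ) + sh α k i) from rfl]
    have hub : b i + h ≤ (2:ℝ)^k*((j0 i : ℝ) + sh α k i)+(2:ℝ)^k := by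
      by_contra hcon
      push_neg at hcon
      have hpt : (2:ℝ)^k * (((j0 i + 1 : ℤ):ℝ) + (-1:ℝ)^k * ((α i : ℕ):ℝ)/3)
          = (2:ℝ)^k*((j0 i : ℝ) + sh α k i)+(2:ℝ)^k := by
        rw [show sh α k i = (-1:ℝ)^k * ((α i : ℕ):ℝ)/3 from rfl]
        push_cast; ring
      have hmem : (2:ℝ)^k * (((j0 i + 1 : ℤ):ℝ) + (-1:ℝ)^k * ((α i : ℕ):ℝ)/3)
          ∈ Set.Ioo (b i) (b i + h) := by
        rw [hpt]
        exact ⟨hbi.2, hcon⟩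
      exact hα i (j0 i + 1) hmem
    exact ⟨le_trans hbi.1 (hx i).1, lt_of_lt_of_le (hx i).2 hub⟩
  · rw [volume_cubeOf, volume_cubeOf]
    have h1 : ENNReal.ofReal ((2:ℝ)^k) ≤ 6 * ENNReal.ofReal h := by
      have h2 : ENNReal.ofReal ((2:ℝ)^k) ≤ ENNReal.ofReal (6*h) := ENNReal.ofReal_le_ofReal hup
      rwa [ENNReal.ofReal_mul (by norm_num : (0:ℝ) ≤ 6), show ENNReal.ofReal 6 = 6 by
        simp [ENNReal.ofReal_ofNat]] at h2
    calc ENNReal.ofReal ((2:ℝ)^k) ^ n ≤ (6 * ENNReal.ofReal h) ^ n :=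
        pow_le_pow_left₀ (zero_le) h1 n
      _ = 6^n * ENNReal.ofReal h ^ n := mul_pow _ _ n
end
end

section
/- For every f ∈ L¹_loc(ℝⁿ) and all x ∈ ℝⁿ, Mf(x) ≤ 6ⁿ ∑_{α=1}^{3ⁿ} M^{𝒟_α} f(x), where M is the Hardy–Littlewood maximal operator over all cubes and M^{𝒟_α} are the dyadic maximal operators associated to the 3ⁿ shifted dyadic grids 𝒟_α. -/
open MeasureTheory ENNReal Set
open scoped NNReal
noncomputable section

variable {n : ℕ}

namespace DyadicAux


def sgn (k : ℤ) : ℤ := if Even k then 1 else -1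

lemma sgn_eq (k : ℤ) : sgn k = 1 ∨ sgn k = -1 := by unfold sgn; split <;> simp

lemma sgn_succ (k : ℤ) : sgn (k + 1) = - sgn k := by
  unfold sgn
  by_cases h : Even k
  · rw [if_pos h, if_neg (by simp [Int.even_add_one, h])]
  · rw [if_neg h, if_pos (Int.even_add_one.mpr h)]; norm_num

def csh (k j : ℤ) : ℝ := ((sgn k * j : ℤ) : ℝ) / 3

def base (k m j : ℤ) : ℝ := (2:ℝ)^k * ((m:ℝ) + csh k j)

def I (k m j : ℤ) : Set ℝ := Set.Ico (base k m j) (base k m j + (2:ℝ)^k)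

lemma two_zpow_pos (k : ℤ) : (0:ℝ) < (2:ℝ)^k := zpow_pos (by norm_num) k

lemma mem_I_iff {k m j : ℤ} {x : ℝ} :
    x ∈ I k m j ↔ ⌊x / (2:ℝ)^k - csh k j⌋ = m := by
  have hp := two_zpow_pos k
  rw [Int.floor_eq_iff, I, Set.mem_Ico, base]
  constructor
  · rintro ⟨h1, h2⟩
    constructor
    · rw [le_sub_iff_add_le, le_div_iff₀ hp]; nlinarith
    · rw [sub_lt_iff_lt_add, div_lt_iff₀ hp]; push_cast; nlinarith
  · rintro ⟨h1, h2⟩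
    rw [le_sub_iff_add_le, le_div_iff₀ hp] at h1
    rw [sub_lt_iff_lt_add, div_lt_iff₀ hp] at h2
    push_cast at h2
    constructor
    · nlinarith
    · nlinarith

lemma I_unique {k m m' j : ℤ} {x : ℝ} (h1 : x ∈ I k m j) (h2 : x ∈ I k m' j) : m = m' := by
  rw [mem_I_iff] at h1 h2; rw [← h1, ← h2]

lemma step (k m j : ℤ) : ∃ m', I k m j ⊆ I (k+1) m' j := by
  obtain ⟨m', h1, h2⟩ : ∃ m', 2*m' ≤ m + sgn k * j ∧ m + sgn k * j - 1 ≤ 2*m' :=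
    ⟨(m + sgn k * j)/2, by omega⟩
  refine ⟨m', ?_⟩
  have hp := two_zpow_pos k
  have hss : csh (k+1) j = - csh k j := by
    unfold csh; rw [sgn_succ]; push_cast; ring
  have h2k : (2:ℝ)^(k+1) = 2 * (2:ℝ)^k := by
    rw [zpow_add_one₀ (by norm_num : (2:ℝ) ≠ 0)]; ring
  have hc3 : 3 * csh k j = ((sgn k * j : ℤ) : ℝ) := by unfold csh; ring
  have h1' : (2*(m':ℝ)) ≤ (m:ℝ) + ((sgn k * j : ℤ):ℝ) := by exact_mod_cast h1
  have h2' : (m:ℝ) + ((sgn k * j : ℤ):ℝ) - 1 ≤ 2*(m':ℝ) := by exact_mod_cast h2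
  apply Set.Ico_subset_Ico
  · calc (2:ℝ)^(k+1) * ((m':ℝ) + csh (k+1) j)
        = (2:ℝ)^k * (2*((m':ℝ) - csh k j)) := by rw [hss, h2k]; ring
      _ ≤ (2:ℝ)^k * ((m:ℝ) + csh k j) := by
          apply mul_le_mul_of_nonneg_left _ hp.le
          linarith
  · calc base k m j + (2:ℝ)^k = (2:ℝ)^k * ((m:ℝ) + csh k j + 1) := by unfold base; ring
      _ ≤ (2:ℝ)^k * (2*((m':ℝ) - csh k j) + 2) := mul_le_mul_of_nonneg_left (by linarith) hp.le
      _ = base (k+1) m' j + (2:ℝ)^(k+1) := by unfold base; rw [hss, h2k]; ring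

lemma nest_nat (j k : ℤ) (t : ℕ) : ∀ m, ∃ m', I k m j ⊆ I (k + t) m' j := by
  induction t with
  | zero => exact fun m => ⟨m, by simp⟩
  | succ t ih =>
      intro m
      obtain ⟨m', h'⟩ := ih m
      obtain ⟨m'', h''⟩ := step (k + t) m' j
      refine ⟨m'', ?_⟩
      have : (k : ℤ) + (t + 1 : ℕ) = (k + t) + 1 := by push_cast; ring
      rw [this]
      exact h'.trans h''

lemma nest (j : ℤ) (k l : ℤ) (hkl : k ≤ l) : ∀ m, ∃ m', I k m j ⊆ I l m' j := by
  obtain ⟨t, rfl⟩ : ∃ t : ℕ, l = k + t :=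
    ⟨(l - k).toNat, by omega⟩
  exact nest_nat j k t

lemma tri {k l : ℤ} (hkl : k ≤ l) (m m' j : ℤ) :
    I k m j ⊆ I l m' j ∨ ∀ x, x ∈ I k m j → x ∉ I l m' j := by
  obtain ⟨m'', h⟩ := nest j k l hkl m
  by_cases he : m'' = m'
  · left; exact he ▸ h
  · right; intro x hx hx'
    exact he (I_unique (h hx) hx')

lemma cover1 (k : ℤ) (a h : ℝ) (hh : 0 < h) (hk : 3*h ≤ (2:ℝ)^k) :
    ∃ (j : Fin 3) (m : ℤ), Set.Ico a (a+h) ⊆ I k m ((j : ℕ) : ℤ) := by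
  have hp := two_zpow_pos k
  have mem : ∀ j : ℤ, a ∈ I k (⌊a / (2:ℝ)^k - csh k j⌋) j := fun j => mem_I_iff.2 rfl
  have sub : ∀ j : ℤ, a + h ≤ base k (⌊a / (2:ℝ)^k - csh k j⌋) j + (2:ℝ)^k →
      Set.Ico a (a+h) ⊆ I k (⌊a / (2:ℝ)^k - csh k j⌋) j := by
    intro j hj
    have hb := (mem j).1
    exact Set.Ico_subset_Ico hb hj
  by_cases h0 : a + h ≤ base k (⌊a / (2:ℝ)^k - csh k 0⌋) 0 + (2:ℝ)^k
  · exact ⟨0, _, by simpa using sub 0 h0⟩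
  by_cases h1 : a + h ≤ base k (⌊a / (2:ℝ)^k - csh k 1⌋) 1 + (2:ℝ)^k
  · exact ⟨1, _, by simpa using sub 1 h1⟩
  exfalso
  push_neg at h0 h1
  have e0lt := h0
  have e1lt := h1
  have e0gt : a < base k (⌊a / (2:ℝ)^k - csh k 0⌋) 0 + (2:ℝ)^k := (mem 0).2
  have e1gt : a < base k (⌊a / (2:ℝ)^k - csh k 1⌋) 1 + (2:ℝ)^k := (mem 1).2
  set d0 : ℤ := ⌊a / (2:ℝ)^k - csh k 0⌋
  set d1 : ℤ := ⌊a / (2:ℝ)^k - csh k 1⌋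
  have hc0 : csh k 0 = 0 := by unfold csh; simp
  have hdiff : base k d0 0 + (2:ℝ)^k - (base k d1 1 + (2:ℝ)^k)
      = (2:ℝ)^k * ((d0:ℝ) - (d1:ℝ) - csh k 1) := by
    unfold base; rw [hc0]; ring
  have habs : |base k d0 0 + (2:ℝ)^k - (base k d1 1 + (2:ℝ)^k)| < h := by
    rw [abs_lt]; constructor <;> linarith
  rw [hdiff, abs_mul, abs_of_pos hp] at habs
  have hlt : |(d0:ℝ) - (d1:ℝ) - csh k 1| < 1/3 := by
    by_contra hcon
    push_neg at hcon
    nlinarith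
  have hcs : csh k 1 = 1/3 ∨ csh k 1 = -(1/3) := by
    unfold csh
    rcases sgn_eq k with hs | hs <;> rw [hs] <;> [left; right] <;> norm_num
  rw [abs_lt] at hlt
  have hd : (d0:ℝ) - d1 = ((d0 - d1 : ℤ) : ℝ) := by push_cast; ring
  rcases hcs with hc | hc
  · rw [hc, hd] at hlt
    obtain ⟨l1, l2⟩ := hlt
    have p1 : (0:ℝ) < ((d0 - d1:ℤ):ℝ) := by linarith
    have p2 : ((d0 - d1:ℤ):ℝ) < 1 := by linarith
    have q1 : (0:ℤ) < d0 - d1 := by exact_mod_cast p1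
    have q2 : (d0 - d1:ℤ) < 1 := by exact_mod_cast p2
    omega
  · rw [hc, hd] at hlt
    obtain ⟨l1, l2⟩ := hlt
    have p1 : ((d0 - d1:ℤ):ℝ) < 0 := by linarith
    have p2 : (-1:ℝ) < ((d0 - d1:ℤ):ℝ) := by linarith
    have q1 : (d0 - d1:ℤ) < 0 := by exact_mod_cast p1
    have q2 : (-1:ℤ) < d0 - d1 := by exact_mod_cast p2
    omega



lemma mem_cubeOf {a : Rn n} {h : ℝ} {x : Rn n} :
    x ∈ cubeOf a h ↔ ∀ i, x i ∈ Set.Ico (a i) (a i + h) := by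
  simp [cubeOf, Set.mem_univ_pi]

lemma mem_gcube {k : ℤ} {m : Fin n → ℤ} {jj : Fin n → ℤ} {x : Rn n} :
    x ∈ cubeOf (fun i => base k (m i) (jj i)) ((2:ℝ)^k) ↔ ∀ i, x i ∈ I k (m i) (jj i) := by
  simp [cubeOf, Set.mem_univ_pi, I, Set.mem_Ico]

def gridOf (α : Fin n → Fin 3) : Set (Set (Rn n)) :=
  { Q | ∃ (k : ℤ) (m : Fin n → ℤ),
      Q = cubeOf (fun i => base k (m i) ((α i : ℕ) : ℤ)) ((2:ℝ)^k) }

lemma inter_cases {k l : ℤ} (hkl : k ≤ l) (m m' : Fin n → ℤ) (jj : Fin n → ℤ) :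
    (cubeOf (fun i => base k (m i) (jj i)) ((2:ℝ)^k) ⊆
      cubeOf (fun i => base l (m' i) (jj i)) ((2:ℝ)^l)) ∨
    (cubeOf (fun i => base k (m i) (jj i)) ((2:ℝ)^k) ∩
      cubeOf (fun i => base l (m' i) (jj i)) ((2:ℝ)^l) = ∅) := by
  by_cases hall : ∀ i, I k (m i) (jj i) ⊆ I l (m' i) (jj i)
  · left; intro x hx
    rw [mem_gcube] at hx ⊢
    exact fun i => hall i (hx i)
  · right
    push_neg at hall
    obtain ⟨i, hi⟩ := hall
    rcases tri hkl (m i) (m' i) (jj i) with h | h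
    · exact absurd h hi
    · ext x
      simp only [Set.mem_inter_iff, Set.mem_empty_iff_false, iff_false, not_and]
      intro h1 h2
      rw [mem_gcube] at h1 h2
      exact h (x i) (h1 i) (h2 i)

lemma isGrid (α : Fin n → Fin 3) : IsDyadicGrid (gridOf α) := by
  refine ⟨?_, ?_, ?_⟩
  · rintro Q ⟨k, m, rfl⟩
    exact ⟨_, k, rfl⟩
  · rintro Q ⟨k, m, rfl⟩ R ⟨l, m', rfl⟩
    rcases le_total k l with hkl | hlk
    · rcases inter_cases hkl m m' (fun i => ((α i : ℕ) : ℤ)) with h | h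
      · exact Or.inl (Set.inter_eq_left.2 h)
      · exact Or.inr (Or.inr h)
    · rcases inter_cases hlk m' m (fun i => ((α i : ℕ) : ℤ)) with h | h
      · exact Or.inr (Or.inl (Set.inter_eq_right.2 h))
      · exact Or.inr (Or.inr (by rw [Set.inter_comm]; exact h))
  · intro k x
    refine ⟨cubeOf (fun i => base k (⌊x i / (2:ℝ)^k - csh k ((α i : ℕ) : ℤ)⌋)
        ((α i : ℕ) : ℤ)) ((2:ℝ)^k), ⟨⟨k, _, rfl⟩, ⟨_, rfl⟩, ?_⟩, ?_⟩
    · rw [mem_gcube]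
      exact fun i => mem_I_iff.2 rfl
    · rintro Q' ⟨⟨k', m', rfl⟩, ⟨a', ha'⟩, hx'⟩
      rcases Nat.eq_zero_or_pos n with hn | hn
      · -- n = 0 : all cubes are univ
        subst hn
        ext y
        rw [mem_gcube, mem_gcube]
        constructor <;> intro _ i <;> exact i.elim0
      · have i0 : Fin n := ⟨0, hn⟩
        have hp' := two_zpow_pos k'
        have hp := two_zpow_pos k
        -- slice at coordinate i0
        have e1 : ∀ r : ℝ, Function.update x i0 r ∈
            cubeOf (fun i => base k' (m' i) ((α i : ℕ) : ℤ)) ((2:ℝ)^k') ↔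
            r ∈ Set.Ico (base k' (m' i0) ((α i0 : ℕ) : ℤ))
              (base k' (m' i0) ((α i0 : ℕ) : ℤ) + (2:ℝ)^k') := by
          intro r
          rw [mem_cubeOf]
          constructor
          · intro hr
            have := hr i0
            rwa [Function.update_self] at this
          · intro hr i
            by_cases hi : i = i0
            · subst hi; rwa [Function.update_self]
            · rw [Function.update_of_ne hi]
              exact (mem_cubeOf.1 hx') i
        have e2 : ∀ r : ℝ, Function.update x i0 r ∈
            cubeOf (fun i => base k' (m' i) ((α i : ℕ) : ℤ)) ((2:ℝ)^k') ↔
            r ∈ Set.Ico (a' i0) (a' i0 + (2:ℝ)^k) := by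
          intro r
          rw [ha', mem_cubeOf]
          constructor
          · intro hr
            have := hr i0
            rwa [Function.update_self] at this
          · intro hr i
            by_cases hi : i = i0
            · subst hi; rwa [Function.update_self]
            · rw [Function.update_of_ne hi]
              have := hx'
              rw [ha', mem_cubeOf] at this
              exact this i
        have hIco : Set.Ico (base k' (m' i0) ((α i0 : ℕ) : ℤ))
            (base k' (m' i0) ((α i0 : ℕ) : ℤ) + (2:ℝ)^k')
            = Set.Ico (a' i0) (a' i0 + (2:ℝ)^k) :=
          Set.ext fun r => (e1 r).symm.trans (e2 r)
        have hne : base k' (m' i0) ((α i0 : ℕ) : ℤ) < base k' (m' i0) ((α i0 : ℕ) : ℤ) + (2:ℝ)^k' := by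
          linarith
        obtain ⟨hb, he⟩ := (Set.Ico_eq_Ico_iff (Or.inl hne)).1 hIco
        have hkk : (2:ℝ)^k' = (2:ℝ)^k := by linarith
        have hk'' : k' = k := zpow_right_injective₀ (by norm_num) (by norm_num) hkk
        subst hk''
        have hxm : ∀ i, x i ∈ I k' (m' i) ((α i : ℕ) : ℤ) := mem_gcube.1 hx'
        have hmm : ∀ i, m' i = ⌊x i / (2:ℝ)^k' - csh k' ((α i : ℕ) : ℤ)⌋ :=
          fun i => (mem_I_iff.1 (hxm i)).symm
        have hfun : (fun i => base k' (m' i) ((α i : ℕ) : ℤ))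
            = (fun i => base k' (⌊x i / (2:ℝ)^k' - csh k' ((α i : ℕ) : ℤ)⌋) ((α i : ℕ) : ℤ)) :=
          funext fun i => by rw [← hmm i]
        rw [hfun]

lemma volume_cubeOf (a : Rn n) (h : ℝ) :
    volume (cubeOf a h) = (ENNReal.ofReal h) ^ n := by
  rw [cubeOf, volume_pi_pi]
  simp only [Real.volume_Ico, add_sub_cancel_left]
  rw [Finset.prod_const, Finset.card_univ, Fintype.card_fin]

lemma cover (Q : Set (Rn n)) (hQ : IsCube Q) :
    ∃ (α : Fin n → Fin 3) (k : ℤ) (m : Fin n → ℤ),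
      Q ⊆ cubeOf (fun i => base k (m i) ((α i : ℕ) : ℤ)) ((2:ℝ)^k) ∧
      volume (cubeOf (fun i => base k (m i) ((α i : ℕ) : ℤ)) ((2:ℝ)^k)) ≤ 6^n * volume Q := by
  obtain ⟨a, h, hh, rfl⟩ := hQ
  obtain ⟨t, ht1, ht2⟩ := exists_mem_Ico_zpow (show (0:ℝ) < 3*h by linarith) (by norm_num : (1:ℝ) < 2)
  set k := t + 1 with hk
  have h3 : 3*h ≤ (2:ℝ)^k := ht2.le
  have h6 : (2:ℝ)^k ≤ 6*h := by
    have : (2:ℝ)^k = 2 * (2:ℝ)^t := by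
      rw [hk, zpow_add_one₀ (by norm_num : (2:ℝ) ≠ 0)]; ring
    rw [this]; linarith
  have hcov := fun i => cover1 k (a i) h hh h3
  choose j m hm using hcov
  refine ⟨j, k, m, ?_, ?_⟩
  · intro x hx
    rw [mem_cubeOf] at hx
    rw [mem_gcube]
    exact fun i => hm i (hx i)
  · rw [volume_cubeOf, volume_cubeOf]
    have hb : ENNReal.ofReal ((2:ℝ)^k) ≤ 6 * ENNReal.ofReal h := by
      calc ENNReal.ofReal ((2:ℝ)^k) ≤ ENNReal.ofReal (6*h) := ENNReal.ofReal_le_ofReal h6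
        _ = ENNReal.ofReal 6 * ENNReal.ofReal h := ENNReal.ofReal_mul (by norm_num)
        _ = 6 * ENNReal.ofReal h := by norm_num
    calc ENNReal.ofReal ((2:ℝ)^k) ^ n ≤ (6 * ENNReal.ofReal h) ^ n := pow_le_pow_left' hb n
      _ = 6^n * ENNReal.ofReal h ^ n := mul_pow _ _ n

lemma volume_cube_pos_fin (Q : Set (Rn n)) (hQ : IsCube Q) :
    volume Q ≠ 0 ∧ volume Q ≠ ∞ := by
  obtain ⟨a, h, hh, rfl⟩ := hQ
  rw [volume_cubeOf]
  constructor
  · exact pow_ne_zero n (by simp [ENNReal.ofReal_eq_zero]; linarith)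
  · exact ENNReal.pow_ne_top ENNReal.ofReal_ne_top

end DyadicAux

open DyadicAux in
theorem maximal_le_sum_dyadic (n : ℕ) :
    ∃ D : Fin (3^n) → Set (Set (Rn n)),
      (∀ a, IsDyadicGrid (D a)) ∧
      (∀ Q : Set (Rn n), IsCube Q → ∃ (a : Fin (3^n)) (Qa : Set (Rn n)),
        Qa ∈ D a ∧ Q ⊆ Qa ∧ volume Qa ≤ 6^n * volume Q) ∧
      ∀ f : Rn n → ℝ, LocallyIntegrable f volume → ∀ x : Rn n,
        maximal (fun y => ENNReal.ofReal |f y|) x ≤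
          6^n * ∑ a : Fin (3^n),
            dyadicMaximal (D a) (fun y => ENNReal.ofReal |f y|) x := by
  refine ⟨fun b => gridOf (finFunctionFinEquiv.symm b), fun b => isGrid _, ?_, ?_⟩
  · intro Q hQ
    obtain ⟨α, k, m, hsub, hvol⟩ := cover Q hQ
    refine ⟨finFunctionFinEquiv α, _, ?_, hsub, hvol⟩
    simp only [Equiv.symm_apply_apply]
    exact ⟨k, m, rfl⟩
  · intro f hf x
    set g : Rn n → ℝ≥0∞ := fun y => ENNReal.ofReal |f y| with hg
    rw [maximal]
    apply iSup_le
    intro Q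
    apply iSup_le
    rintro ⟨hQ, hxQ⟩
    obtain ⟨α, k, m, hsub, hvol⟩ := cover Q hQ
    set Qa := cubeOf (fun i => base k (m i) ((α i : ℕ) : ℤ)) ((2:ℝ)^k) with hQa
    set b : Fin (3^n) := finFunctionFinEquiv α with hb
    have hmem : Qa ∈ gridOf (finFunctionFinEquiv.symm b) := by
      rw [hb, Equiv.symm_apply_apply]
      exact ⟨k, m, rfl⟩
    obtain ⟨hV0, hVtop⟩ := volume_cube_pos_fin Q hQ
    have h6n0 : (6:ℝ≥0∞)^n ≠ 0 := by positivity
    have h6nt : (6:ℝ≥0∞)^n ≠ ∞ := by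
      exact ENNReal.pow_ne_top (by norm_num)
    have hinv : (volume Q)⁻¹ ≤ 6^n * (volume Qa)⁻¹ := by
      have h1 : (6^n * volume Q)⁻¹ ≤ (volume Qa)⁻¹ :=
        ENNReal.inv_le_inv.2 hvol
      calc (volume Q)⁻¹ = 6^n * ((6:ℝ≥0∞)^n)⁻¹ * (volume Q)⁻¹ := by
            rw [ENNReal.mul_inv_cancel h6n0 h6nt, one_mul]
        _ = 6^n * (6^n * volume Q)⁻¹ := by
            rw [ENNReal.mul_inv (Or.inl h6n0) (Or.inl h6nt), mul_assoc]
        _ ≤ 6^n * (volume Qa)⁻¹ := mul_le_mul_right h1 _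
    have hint : ∫⁻ y in Q, g y ∂volume ≤ ∫⁻ y in Qa, g y ∂volume :=
      lintegral_mono' (Measure.restrict_mono hsub le_rfl) le_rfl
    have key : avgE Q g ≤ 6^n * avgE Qa g := by
      rw [avgE, avgE, ← mul_assoc]
      exact mul_le_mul' hinv hint
    have hdy : avgE Qa g ≤ dyadicMaximal (gridOf (finFunctionFinEquiv.symm b)) g x := by
      rw [dyadicMaximal]
      exact le_iSup₂_of_le Qa ⟨hmem, hsub hxQ⟩ le_rfl
    have hsum : dyadicMaximal (gridOf (finFunctionFinEquiv.symm b)) g x ≤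
        ∑ a : Fin (3^n), dyadicMaximal (gridOf (finFunctionFinEquiv.symm a)) g x :=
      Finset.single_le_sum
        (f := fun a : Fin (3^n) => dyadicMaximal (gridOf (finFunctionFinEquiv.symm a)) g x)
        (fun _ _ => zero_le) (Finset.mem_univ b)
    calc avgE Q g ≤ 6^n * avgE Qa g := key
      _ ≤ 6^n * ∑ a : Fin (3^n), dyadicMaximal (gridOf (finFunctionFinEquiv.symm a)) g x :=
          mul_le_mul_right (hdy.trans hsum) _
end
end
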